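/- Let P ∈ 𝕊ⁿ₊₊, C ∈ ℝ^{q×n}, D ∈ ℝ^{q×m}, K ∈ ℝ^{m×n}, μ₁, μ₂ > 0, and let H_l(μ₁, P; μ̃₁, P̃) = μ̃₁²I + 2μ̃₁P̃ + P̃² − 2μ₁(μ̃₁I + P̃) − (2μ̃₁I + P̃)P − PP̃. If the block matrix [[(1/4)H_l(μ₁,P;μ̃₁,P̃), 0, (C+DK)ᵀ, (1/2)(μ₁I−P)], [0, −μ₂I, 0, 0], [C+DK, 0, −I, 0], [(1/2)(μ₁I−P), 0, 0, −I]] is negative semidefinite, then [[−μ₁P, 0, (C+DK)ᵀ], [0, −μ₂I, 0], [C+DK, 0, −I]] is negative semidefinite. -/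

import Mathlib

open Matrix

set_option maxRecDepth 10000

/-- SCA implication for the decentralized performance LMI: if the linearized 4×4 block
matrix (built from `H_l(μ₁, P; μ̃₁, P̃)`) is negative semidefinite, then the original
3×3 block matrix `[[-μ₁P, 0, (C+DK)ᵀ], [0, -μ₂I, 0], [C+DK, 0, -I]]` is negative
semidefinite. -/
theorem sca_performance_implication (n m p q : ℕ)
    (P Pt : Matrix (Fin n) (Fin n) ℝ) (hP : P.PosDef) (hPt : Pt.PosDef)
    (C : Matrix (Fin q) (Fin n) ℝ) (D : Matrix (Fin q) (Fin m) ℝ)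
    (K : Matrix (Fin m) (Fin n) ℝ)
    (μ₁ μ₂ μ₁t : ℝ) (hμ₁ : 0 < μ₁) (hμ₂ : 0 < μ₂) (hμ₁t : 0 < μ₁t)
    (hLMI : (-(Matrix.fromBlocks
        (Matrix.fromBlocks
          ((1/4 : ℝ) • ((μ₁t ^ 2) • (1 : Matrix (Fin n) (Fin n) ℝ) + (2 * μ₁t) • Pt
            + Pt * Pt - (2 * μ₁) • (μ₁t • (1 : Matrix (Fin n) (Fin n) ℝ) + Pt)
            - ((2 * μ₁t) • (1 : Matrix (Fin n) (Fin n) ℝ) + Pt) * P - P * Pt))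
          (0 : Matrix (Fin n) (Fin p) ℝ)
          (0 : Matrix (Fin p) (Fin n) ℝ)
          (-μ₂ • (1 : Matrix (Fin p) (Fin p) ℝ)))
        (Matrix.fromBlocks
          ((C + D * K)ᵀ)
          ((1/2 : ℝ) • (μ₁ • (1 : Matrix (Fin n) (Fin n) ℝ) - P))
          (0 : Matrix (Fin p) (Fin q) ℝ)
          (0 : Matrix (Fin p) (Fin n) ℝ))
        (Matrix.fromBlocks
          (C + D * K)
          (0 : Matrix (Fin q) (Fin p) ℝ)
          ((1/2 : ℝ) • (μ₁ • (1 : Matrix (Fin n) (Fin n) ℝ) - P))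
          (0 : Matrix (Fin n) (Fin p) ℝ))
        (Matrix.fromBlocks
          (-(1 : Matrix (Fin q) (Fin q) ℝ))
          (0 : Matrix (Fin q) (Fin n) ℝ)
          (0 : Matrix (Fin n) (Fin q) ℝ)
          (-(1 : Matrix (Fin n) (Fin n) ℝ))))).PosSemidef) :
    (-(Matrix.fromBlocks
        (-μ₁ • P)
        (Matrix.fromCols (0 : Matrix (Fin n) (Fin p) ℝ) ((C + D * K)ᵀ))
        (Matrix.fromRows (0 : Matrix (Fin p) (Fin n) ℝ) (C + D * K))
        (Matrix.fromBlocks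
          (-μ₂ • (1 : Matrix (Fin p) (Fin p) ℝ)) (0 : Matrix (Fin p) (Fin q) ℝ)
          (0 : Matrix (Fin q) (Fin p) ℝ) (-(1 : Matrix (Fin q) (Fin q) ℝ))))).PosSemidef := by
  obtain ⟨hH, hQ⟩ := posSemidef_iff_dotProduct_mulVec.mp hLMI
  have hPsym : Pᵀ = P := by
    rw [← conjTranspose_eq_transpose_of_trivial]; exact hP.isHermitian
  rw [posSemidef_iff_dotProduct_mulVec]
  constructor
  · refine Matrix.IsHermitian.neg ?_
    rw [Matrix.IsHermitian, conjTranspose_eq_transpose_of_trivial,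
      fromBlocks_transpose, fromBlocks_transpose, transpose_fromCols, transpose_fromRows]
    simp [hPsym, transpose_smul]
  · intro x
    set E := C + D * K with hE
    have hx : x = Sum.elim (x ∘ Sum.inl) (Sum.elim (x ∘ Sum.inr ∘ Sum.inl) (x ∘ Sum.inr ∘ Sum.inr)) := by
      funext s; rcases s with i | j | k <;> rfl
    set u : Fin n → ℝ := x ∘ Sum.inl with hu
    set y : Fin p → ℝ := x ∘ Sum.inr ∘ Sum.inl with hy
    set r : Fin q → ℝ := x ∘ Sum.inr ∘ Sum.inr with hr
    set v : Fin n → ℝ := (1/2 : ℝ) • (μ₁ • u - P *ᵥ u) with hv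
    have hPu : ∀ s : Fin n → ℝ, u ⬝ᵥ (P *ᵥ s) = (P *ᵥ u) ⬝ᵥ s := by
      intro s
      rw [dotProduct_mulVec]
      conv_lhs => rw [← hPsym, vecMul_transpose]
    have hPtsym : Ptᵀ = Pt := by
      rw [← conjTranspose_eq_transpose_of_trivial]; exact hPt.isHermitian
    have hPtu : ∀ s : Fin n → ℝ, u ⬝ᵥ (Pt *ᵥ s) = (Pt *ᵥ u) ⬝ᵥ s := by
      intro s
      rw [dotProduct_mulVec]
      conv_lhs => rw [← hPtsym, vecMul_transpose]
    have hEu : ∀ s : Fin q → ℝ, u ⬝ᵥ (Eᵀ *ᵥ s) = (E *ᵥ u) ⬝ᵥ s := by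
      intro s
      rw [dotProduct_mulVec, vecMul_transpose]
    have hc3 : (Pt *ᵥ u) ⬝ᵥ (P *ᵥ u) = (P *ᵥ u) ⬝ᵥ (Pt *ᵥ u) := dotProduct_comm _ _
    have hc4 : r ⬝ᵥ (E *ᵥ u) = (E *ᵥ u) ⬝ᵥ r := dotProduct_comm _ _
    have h4 := hQ (Sum.elim (Sum.elim u y) (Sum.elim r v))
    have hww : (0:ℝ) ≤ ((μ₁t - μ₁) • u + Pt *ᵥ u - P *ᵥ u) ⬝ᵥ ((μ₁t - μ₁) • u + Pt *ᵥ u - P *ᵥ u) :=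
      Finset.sum_nonneg fun _ _ => mul_self_nonneg _
    rw [hx]
    rw [star_trivial] at h4 ⊢
    simp only [hv, neg_mulVec, dotProduct_neg, fromBlocks_mulVec, fromRows_mulVec,
      fromCols_mulVec_sumElim, sumElim_dotProduct_sumElim, Sum.elim_comp_inl,
      Sum.elim_comp_inr, mulVec_add, add_mulVec, sub_mulVec, mulVec_sub, mulVec_smul,
      smul_mulVec, one_mulVec, ← mulVec_mulVec, Matrix.zero_mul, Matrix.neg_mul, Matrix.one_mul, zero_mulVec, neg_mulVec, mulVec_zero,
      dotProduct_zero, zero_dotProduct, add_zero, zero_add, dotProduct_add, add_dotProduct,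
      dotProduct_sub, sub_dotProduct, dotProduct_smul, smul_dotProduct, smul_eq_mul,
      neg_dotProduct, dotProduct_neg, hPu, hPtu, hEu, hc3, hc4] at h4 ⊢
    simp only [sub_dotProduct, add_dotProduct, smul_dotProduct, dotProduct_sub,
      dotProduct_add, dotProduct_smul, smul_eq_mul, hPu, hPtu, hc3] at hww
    linarith [h4, hww]
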